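/- arXiv:2012.00853 — 8 statements merged into one kernel-verified Lean document; each statement's English description precedes it below -/
import Mathlib

section
/- Let U : 𝒜 ⥤ ℬ be a local right adjoint, B an object of ℬ, and f₁ : B → U(A₁), f₂ : B → U(A₂) morphisms of ℬ. If there is a morphism u : A_{f₁} → A_{f₂} in 𝒜 such that U(u) ∘ η^{A₁}_{f₁} = η^{A₂}_{f₂} (i.e. u relates the two local units as objects of B ↓ U), then u is an isomorphism. -/
open CategoryTheory CategoryTheory.Limits

universe v u₁ u₂

namespace Diers

variable {𝒜 : Type u₁} {ℬ : Type u₂} [Category.{v} 𝒜] [Category.{v} ℬ]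

/-- The data of a *local right adjoint* `U : 𝒜 ⥤ ℬ`, given pointwise: for every
`f : B ⟶ U.obj A` (an object of the slice `ℬ/U(A)`), a universal arrow consisting of
the object `A_f = vertex f`, the morphism `L_A(f) = L f : A_f ⟶ A` (the value of the
left adjoint `L_A` of `U/A : 𝒜/A ⥤ ℬ/U(A)`) and the local unit `η^A_f = η f`,
satisfying `U(L_A(f)) ∘ η^A_f = f` together with the universal property expressing the
adjunction `L_A ⊣ U/A`: any factorization `f = U(u) ∘ g` through `u : A' ⟶ A` is
induced by a unique morphism `w : A_f ⟶ A'` over `A`. -/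
structure LocalAdjunction (U : 𝒜 ⥤ ℬ) where
  vertex : ∀ {B : ℬ} {A : 𝒜}, (B ⟶ U.obj A) → 𝒜
  L : ∀ {B : ℬ} {A : 𝒜} (f : B ⟶ U.obj A), vertex f ⟶ A
  η : ∀ {B : ℬ} {A : 𝒜} (f : B ⟶ U.obj A), B ⟶ U.obj (vertex f)
  fac : ∀ {B : ℬ} {A : 𝒜} (f : B ⟶ U.obj A), η f ≫ U.map (L f) = f
  lift : ∀ {B : ℬ} {A A' : 𝒜} (f : B ⟶ U.obj A) (u : A' ⟶ A) (g : B ⟶ U.obj A'),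
      g ≫ U.map u = f → (vertex f ⟶ A')
  lift_comp : ∀ {B : ℬ} {A A' : 𝒜} (f : B ⟶ U.obj A) (u : A' ⟶ A) (g : B ⟶ U.obj A')
      (h : g ≫ U.map u = f), lift f u g h ≫ u = L f
  η_lift : ∀ {B : ℬ} {A A' : 𝒜} (f : B ⟶ U.obj A) (u : A' ⟶ A) (g : B ⟶ U.obj A')
      (h : g ≫ U.map u = f), η f ≫ U.map (lift f u g h) = g
  lift_uniq : ∀ {B : ℬ} {A A' : 𝒜} (f : B ⟶ U.obj A) (u : A' ⟶ A) (g : B ⟶ U.obj A')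
      (h : g ≫ U.map u = f) (w : vertex f ⟶ A'),
      w ≫ u = L f → η f ≫ U.map w = g → w = lift f u g h

/-- Auxiliary: any morphism of `B ↓ U` between two local units admits a left inverse
which is again a morphism of `B ↓ U` between the units (in the other direction). -/
theorem exists_section (U : 𝒜 ⥤ ℬ) (D : LocalAdjunction U)
    {B : ℬ} {A₁ A₂ : 𝒜} (f₁ : B ⟶ U.obj A₁) (f₂ : B ⟶ U.obj A₂)
    (u : D.vertex f₁ ⟶ D.vertex f₂) (h : D.η f₁ ≫ U.map u = D.η f₂) :
    ∃ v : D.vertex f₂ ⟶ D.vertex f₁,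
      v ≫ u = 𝟙 (D.vertex f₂) ∧ D.η f₂ ≫ U.map v = D.η f₁ := by
  have hfac : D.η f₁ ≫ U.map (u ≫ D.L f₂) = f₂ := by
    rw [U.map_comp, ← Category.assoc, h, D.fac]
  refine ⟨D.lift f₂ (u ≫ D.L f₂) (D.η f₁) hfac, ?_, D.η_lift _ _ _ _⟩
  have h1 : (D.lift f₂ (u ≫ D.L f₂) (D.η f₁) hfac ≫ u) ≫ D.L f₂ = D.L f₂ := by
    rw [Category.assoc]; exact D.lift_comp _ _ _ _
  have h2 : D.η f₂ ≫ U.map (D.lift f₂ (u ≫ D.L f₂) (D.η f₁) hfac ≫ u) = D.η f₂ := by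
    rw [U.map_comp, ← Category.assoc, D.η_lift, h]
  have e1 := D.lift_uniq f₂ (D.L f₂) (D.η f₂) (D.fac f₂) _ h1 h2
  have e2 := D.lift_uniq f₂ (D.L f₂) (D.η f₂) (D.fac f₂) (𝟙 _)
    (Category.id_comp _) (by simp)
  rw [e1, e2]

/-- **Local units related by a morphism in the range of `U` are isomorphic.**
Let `U : 𝒜 ⥤ ℬ` be a local right adjoint, `B` an object of `ℬ` and
`f₁ : B ⟶ U(A₁)`, `f₂ : B ⟶ U(A₂)`. If `u : A_{f₁} ⟶ A_{f₂}` is a morphism of `𝒜`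
with `U(u) ∘ η^{A₁}_{f₁} = η^{A₂}_{f₂}` (i.e. `u` is a morphism of `B ↓ U` between the
two local units), then `u` is an isomorphism. -/
theorem units_form_a_set (U : 𝒜 ⥤ ℬ) (D : LocalAdjunction U)
    {B : ℬ} {A₁ A₂ : 𝒜} (f₁ : B ⟶ U.obj A₁) (f₂ : B ⟶ U.obj A₂)
    (u : D.vertex f₁ ⟶ D.vertex f₂) (h : D.η f₁ ≫ U.map u = D.η f₂) :
    IsIso u := by
  obtain ⟨v, hv1, hv2⟩ := exists_section U D f₁ f₂ u h
  obtain ⟨w, hw1, hw2⟩ := exists_section U D f₂ f₁ v hv2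
  have hwu : w = u := by
    calc w = w ≫ v ≫ u := by rw [hv1, Category.comp_id]
    _ = (w ≫ v) ≫ u := by rw [Category.assoc]
    _ = u := by rw [hw1, Category.id_comp]
  exact ⟨v, by rw [← hwu]; exact hw1, hv1⟩

end Diers
end

section
/- Let U : 𝒜 ⥤ ℬ be a right multi-adjoint. Then for every object B of ℬ, the co-nerve functor 𝒩^U_B = ℬ(B, U(−)) : 𝒜 ⥤ Set decomposes as a coproduct of corepresentable functors: 𝒩^U_B ≅ ∐_{i ∈ I_B} 𝒜(A_i, −), where (n_i : B → U(A_i))_{i ∈ I_B} is the small multi-initial family of local units under B. -/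
open CategoryTheory CategoryTheory.Limits

universe v u₁ u₂

namespace Diers

variable {𝒜 : Type u₁} {ℬ : Type u₂} [Category.{v} 𝒜] [Category.{v} ℬ]

/-- A family `X : I → 𝒞` is *multi-initial* if for every object `C` of `𝒞` there is a
unique index `i : I` and a unique arrow `X i ⟶ C` (uniqueness of the pair `⟨i, f⟩`). -/
def IsMultiInitialFamily {𝒞 : Type*} [Category 𝒞] {I : Type*} (X : I → 𝒞) : Prop :=
  ∀ C : 𝒞, ∃ p : Σ i : I, X i ⟶ C, ∀ q : Σ i : I, X i ⟶ C, q = p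

/-- `U : 𝒜 ⥤ ℬ` is a *right multi-adjoint* if for every `B : ℬ` the comma category
`B ↓ U` admits a small multi-initial family. -/
def IsRightMultiAdjoint (U : 𝒜 ⥤ ℬ) : Prop :=
  ∀ B : ℬ, ∃ (I : Type v) (n : I → StructuredArrow B U), IsMultiInitialFamily n

/-- The coproduct `∐_{i ∈ I} 𝒜(X i, −) : 𝒜 ⥤ Set` of the corepresentable functors of a
small family of objects `X : I → 𝒜`, computed pointwise as a sigma type. -/
def sigmaCorepresentable {I : Type v} (X : I → 𝒜) : 𝒜 ⥤ Type v where
  obj A := Σ i : I, X i ⟶ A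
  map f := TypeCat.ofHom fun p => ⟨p.1, p.2 ≫ f⟩
  map_id A := by ext p; cases p; simp; exact heq_of_eq (by simp)
  map_comp f g := by ext p; cases p; simp; exact heq_of_eq (by simp)

/-- **The co-nerve of a right multi-adjoint is a coproduct of corepresentables.**
Let `U : 𝒜 ⥤ ℬ` be a right multi-adjoint and `B : ℬ`, with small multi-initial family
of local units `(nᵢ : B ⟶ U(Aᵢ))_{i ∈ I}` in `B ↓ U`. Then the co-nerve
`𝒩^U_B = ℬ(B, U(−)) : 𝒜 ⥤ Set` is isomorphic to `∐_{i ∈ I} 𝒜(Aᵢ, −)`. -/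
theorem conerve_iso_coproduct_corepresentables (U : 𝒜 ⥤ ℬ)
    (hU : IsRightMultiAdjoint U) (B : ℬ) {I : Type v}
    (n : I → StructuredArrow B U) (hn : IsMultiInitialFamily n) :
    Nonempty ((U ⋙ coyoneda.obj (Opposite.op B)) ≅
      sigmaCorepresentable (fun i => (n i).right)) := by
  refine ⟨(NatIso.ofComponents (fun A => Equiv.toIso
    ({ toFun := fun p => (n p.1).hom ≫ U.map p.2
       invFun := fun g => ⟨(hn (StructuredArrow.mk g)).choose.1,
         (hn (StructuredArrow.mk g)).choose.2.right⟩
       left_inv := by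
         rintro ⟨i, u⟩
         have h := (hn (StructuredArrow.mk ((n i).hom ≫ U.map u))).choose_spec
           ⟨i, StructuredArrow.homMk u rfl⟩
         dsimp only
         rw [← h]
         rfl
       right_inv := by
         intro g
         have w := (hn (StructuredArrow.mk g)).choose.2.w
         simpa using w.symm } :
      (Σ i : I, (n i).right ⟶ A) ≃ (B ⟶ U.obj A))) ?_).symm⟩
  intro A A' f
  ext p
  rcases p with ⟨i, u⟩
  simp [sigmaCorepresentable]

end Diers
end

section
/- Let U : 𝒜 ↪ ℬ be a full multireflective subcategory inclusion (a fully faithful right multi-adjoint). If ℬ has all small colimits, then 𝒜 has multicolimits of all small diagrams: for every small diagram F : I ⥤ 𝒜, the composites of the colimit cocone of U∘F in ℬ with the local units under colim U∘F lift along the fully faithful U to a small family of cocones over F in 𝒜 which is multi-initial in the category of cocones over F. -/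
open CategoryTheory CategoryTheory.Limits

universe v u₁ u₂

namespace Diers

variable {𝒜 : Type u₁} {ℬ : Type u₂} [Category.{v} 𝒜] [Category.{v} ℬ]

/-- **Multicolimits in a full multireflective subcategory.**
Let `U : 𝒜 ↪ ℬ` be a full multireflective subcategory inclusion, i.e. a fully faithful
right multi-adjoint. If `ℬ` has all small colimits then `𝒜` has multicolimits of all
small diagrams: every small diagram `F : I ⥤ 𝒜` admits a small family of cocones which
is multi-initial in the category of cocones over `F` (obtained by lifting along the
fully faithful `U` the composites of the colimit cocone of `U ∘ F` with the local units
under `colim U ∘ F`). -/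
theorem multicolimits_of_full_multireflective (U : 𝒜 ⥤ ℬ) [U.Full] [U.Faithful]
    (hU : IsRightMultiAdjoint U) [HasColimitsOfSize.{v, v} ℬ]
    {I : Type v} [SmallCategory I] (F : I ⥤ 𝒜) :
    ∃ (J : Type v) (c : J → Cocone F), IsMultiInitialFamily c := by
  set G := F ⋙ U with hG
  obtain ⟨J, n, hn⟩ := hU (colimit G)
  refine ⟨J, fun j =>
    { pt := (n j).right
      ι := { app := fun i => U.preimage (colimit.ι G i ≫ (n j).hom)
             naturality := fun i i' f => by
               apply U.map_injective
               simp only [Functor.map_comp, Functor.map_preimage, Functor.const_obj_obj,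
                 Functor.const_obj_map, Category.comp_id]
               rw [← Category.assoc]
               congr 1
               exact colimit.w G f } }, ?_⟩
  intro s
  set g : colimit G ⟶ U.obj s.pt := colimit.desc G (U.mapCocone s) with hg
  obtain ⟨⟨j, h⟩, hp⟩ := hn (StructuredArrow.mk g)
  have hw : (n j).hom ≫ U.map h.right = g := StructuredArrow.w h
  refine ⟨⟨j, { hom := h.right, w := fun i => ?_ }⟩, fun q => ?_⟩
  · apply U.map_injective
    simp only [Functor.map_comp, Functor.map_preimage, Category.assoc, hw, hg]
    exact colimit.ι_desc (U.mapCocone s) i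
  · obtain ⟨j', m⟩ := q
    have hwq : (n j').hom ≫ U.map m.hom = g := by
      apply colimit.hom_ext
      intro i
      rw [← Category.assoc]
      have h1 : colimit.ι G i ≫ (n j').hom =
          U.map (U.preimage (colimit.ι G i ≫ (n j').hom)) := by
        rw [Functor.map_preimage]
      rw [h1, ← Functor.map_comp, m.w i, hg, colimit.ι_desc]
      rfl
    have hq' := hp ⟨j', StructuredArrow.homMk (show (n j').right ⟶ s.pt from m.hom) hwq⟩
    obtain ⟨rfl, h2⟩ := Sigma.mk.inj_iff.mp hq'
    have h3 : StructuredArrow.homMk (show (n j').right ⟶ s.pt from m.hom) hwq = h :=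
      eq_of_heq h2
    have h5 : m.hom = h.right := congrArg CommaMorphism.right h3
    congr 1
    apply CoconeMorphism.ext
    exact h5

end Diers
end

section
/- Let U : 𝒜 ↪ ℬ be a full multireflective subcategory inclusion (a fully faithful right multi-adjoint). If ℬ has all small limits, then 𝒜 has all connected limits and they are created by U: for every small connected category I and diagram F : I ⥤ 𝒜, all the limit projections of lim U∘F in ℬ factor through a common local unit n_F : lim U∘F → U(A_F), the resulting cone over F in 𝒜 is a limit cone, and n_F is an isomorphism. -/
open CategoryTheory CategoryTheory.Limits

universe v u₁ u₂

namespace Diers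

variable {𝒜 : Type u₁} {ℬ : Type u₂} [Category.{v} 𝒜] [Category.{v} ℬ]

/-- **Connected limits in a full multireflective subcategory.**
Let `U : 𝒜 ↪ ℬ` be a full multireflective subcategory inclusion (a fully faithful
right multi-adjoint) and suppose `ℬ` has all small limits. Then for every small
connected category `I`:
* `𝒜` has limits of shape `I` and they are created by `U`, and
* for every diagram `F : I ⥤ 𝒜` and every multi-initial family `n` of local units
  under `lim U∘F` in `(lim U∘F) ↓ U`, all the limit projections of `lim U∘F` factor
  through a common local unit `n j` via a cone `π` over `F` in `𝒜`, this cone is a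
  limit cone, and `n j` is an isomorphism. -/
theorem connected_limits_of_full_multireflective (U : 𝒜 ⥤ ℬ) [U.Full] [U.Faithful]
    (hU : IsRightMultiAdjoint U) [HasLimitsOfSize.{v, v} ℬ]
    (I : Type v) [SmallCategory I] [CategoryTheory.IsConnected I] :
    HasLimitsOfShape I 𝒜 ∧ Nonempty (CreatesLimitsOfShape I U) ∧
    (∀ (F : I ⥤ 𝒜) {J : Type v} (n : J → StructuredArrow (limit (F ⋙ U)) U),
      IsMultiInitialFamily n →
      ∃ (j : J) (π : (Functor.const I).obj ((n j).right) ⟶ F),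
        (∀ i : I, (n j).hom ≫ U.map (π.app i) = limit.π (F ⋙ U) i) ∧
        IsIso (n j).hom ∧
        Nonempty (IsLimit (⟨(n j).right, π⟩ : Cone F))) := by
  classical
  have main : ∀ (F : I ⥤ 𝒜) {J : Type v} (n : J → StructuredArrow (limit (F ⋙ U)) U),
      IsMultiInitialFamily n →
      ∃ (j : J) (π : (Functor.const I).obj ((n j).right) ⟶ F),
        (∀ i : I, (n j).hom ≫ U.map (π.app i) = limit.π (F ⋙ U) i) ∧
        IsIso (n j).hom ∧
        Nonempty (IsLimit (⟨(n j).right, π⟩ : Cone F)) := by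
    intro F J n hn
    have uniq : ∀ (C : StructuredArrow (limit (F ⋙ U)) U)
        (m m' : Σ j : J, n j ⟶ C), m = m' := by
      intro C m m'
      obtain ⟨p, hp⟩ := hn C
      rw [hp m, hp m']
    have uniq_hom : ∀ (C : StructuredArrow (limit (F ⋙ U)) U) (j : J)
        (m m' : n j ⟶ C), m = m' := by
      intro C j m m'
      have h := uniq C ⟨j, m⟩ ⟨j, m'⟩
      injection h
    choose p hp using fun i : I => hn (StructuredArrow.mk (limit.π (F ⋙ U) i))
    have hconst : ∀ (i i' : I) (_ : i ⟶ i'), (p i).1 = (p i').1 := by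
      intro i i' φ
      have hw : (StructuredArrow.mk (limit.π (F ⋙ U) i)).hom ≫ U.map (F.map φ)
          = (StructuredArrow.mk (limit.π (F ⋙ U) i')).hom := by
        simpa using limit.w (F ⋙ U) φ
      have := hp i' ⟨(p i).1, (p i).2 ≫ StructuredArrow.homMk (F.map φ) hw⟩
      exact congrArg Sigma.fst this
    have hj : ∀ i i' : I, (p i).1 = (p i').1 :=
      constant_of_preserves_morphisms _ hconst
    obtain ⟨i₀⟩ : Nonempty I := inferInstance
    set j₀ := (p i₀).1 with hj₀
    refine ⟨j₀, ?_⟩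
    have m : ∀ i : I, n j₀ ⟶ StructuredArrow.mk (limit.π (F ⋙ U) i) :=
      fun i => eqToHom (congrArg n (hj i₀ i)) ≫ (p i).2
    have hw : ∀ i : I, (n j₀).hom ≫ U.map (m i).right = limit.π (F ⋙ U) i := by
      intro i
      simpa using StructuredArrow.w (m i)
    have hnat : ∀ (i i' : I) (φ : i ⟶ i'), (m i).right ≫ F.map φ = (m i').right := by
      intro i i' φ
      have hw' : (StructuredArrow.mk (limit.π (F ⋙ U) i)).hom ≫ U.map (F.map φ)
          = (StructuredArrow.mk (limit.π (F ⋙ U) i')).hom := by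
        simpa using limit.w (F ⋙ U) φ
      have h := uniq_hom (StructuredArrow.mk (limit.π (F ⋙ U) i')) j₀
        (m i ≫ StructuredArrow.homMk (F.map φ) hw') (m i')
      have := congrArg CommaMorphism.right h
      simpa using this
    let π : (Functor.const I).obj ((n j₀).right) ⟶ F :=
      { app := fun i => (m i).right
        naturality := fun i i' φ => by simp [hnat i i' φ] }
    refine ⟨π, fun i => hw i, ?_⟩
    let c : Cone (F ⋙ U) := U.mapCone ⟨(n j₀).right, π⟩
    let t : U.obj ((n j₀).right) ⟶ limit (F ⋙ U) := limit.lift (F ⋙ U) c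
    have h1 : (n j₀).hom ≫ t = 𝟙 _ := by
      apply limit.hom_ext
      intro i
      simp [t, c, π, hw i]
    have h2 : t ≫ (n j₀).hom = 𝟙 _ := by
      have hs : (n j₀).hom ≫ U.map (U.preimage (t ≫ (n j₀).hom)) = (n j₀).hom := by
        rw [U.map_preimage, ← Category.assoc, h1, Category.id_comp]
      have h := uniq_hom (n j₀) j₀ (StructuredArrow.homMk (U.preimage (t ≫ (n j₀).hom)) hs)
        (𝟙 (n j₀))
      have h' := congrArg CommaMorphism.right h
      simp only [StructuredArrow.homMk_right] at h'
      have : U.map (U.preimage (t ≫ (n j₀).hom)) = U.map (𝟙 _) := by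
        rw [h']; rfl
      rw [U.map_preimage, U.map_id] at this
      exact this
    have hiso : IsIso (n j₀).hom := ⟨t, h1, h2⟩
    refine ⟨hiso, ⟨?_⟩⟩
    have hlc : IsLimit c := by
      refine IsLimit.ofIsoLimit (limit.isLimit (F ⋙ U))
        (Cones.ext (@asIso _ _ _ _ (n j₀).hom hiso) fun i => ?_)
      simpa [c, π] using (hw i).symm
    exact isLimitOfReflects U hlc
  obtain ⟨hhas⟩ : Nonempty (HasLimitsOfShape I 𝒜) := by
    refine ⟨⟨fun F => ?_⟩⟩
    obtain ⟨J, n, hn⟩ := hU (limit (F ⋙ U))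
    obtain ⟨j, π, _, _, ⟨hl⟩⟩ := main F n hn
    exact HasLimit.mk ⟨⟨(n j).right, π⟩, hl⟩
  have hcr : ∀ F : I ⥤ 𝒜, Nonempty (CreatesLimit F U) := by
    intro F
    obtain ⟨J, n, hn⟩ := hU (limit (F ⋙ U))
    obtain ⟨j, π, _, hiso, _⟩ := main F n hn
    exact ⟨createsLimitOfFullyFaithfulOfIso (n j).right (@asIso _ _ _ _ (n j).hom hiso).symm⟩
  exact ⟨hhas, ⟨⟨fun {F} => Classical.choice (hcr F)⟩⟩, main⟩


end Diers
end

section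
/- Let U : 𝒜 ⥤ ℬ be a functor and B an object of ℬ. (i) If n₁ : B → U(A₁) and n₂ : B → U(A₂) are candidates for U and there is u : A₂ → A₁ in 𝒜 with U(u) ∘ n₂ = n₁, then u is an isomorphism (so n₁ and n₂ are isomorphic in B ↓ U). (ii) Consequently, if a morphism f : B → U(A) admits a stable factorization f = U(u_f) ∘ n_f with n_f a candidate, this factorization is unique up to a unique isomorphism. -/
open CategoryTheory CategoryTheory.Limits

universe v u₁ u₂

namespace Diers

variable {𝒜 : Type u₁} {ℬ : Type u₂} [Category.{v} 𝒜] [Category.{v} ℬ]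

/-- A morphism `n : B ⟶ U(A)` is a *candidate* (diagonally universal toward `U`) if for
every `f : B ⟶ U(A₁)`, `v : A₁ ⟶ A₂` and `u : A ⟶ A₂` with `U(v) ∘ f = U(u) ∘ n`,
there exists a unique `w : A ⟶ A₁` in `𝒜` with `v ∘ w = u` and `U(w) ∘ n = f`. -/
def IsCandidate (U : 𝒜 ⥤ ℬ) {B : ℬ} {A : 𝒜} (n : B ⟶ U.obj A) : Prop :=
  ∀ {A₁ A₂ : 𝒜} (f : B ⟶ U.obj A₁) (v : A₁ ⟶ A₂) (u : A ⟶ A₂),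
    f ≫ U.map v = n ≫ U.map u → ∃! w : A ⟶ A₁, w ≫ v = u ∧ n ≫ U.map w = f

/-- **Uniqueness of candidates and of stable factorizations.**
(i) If `n₁ : B ⟶ U(A₁)` and `n₂ : B ⟶ U(A₂)` are candidates and `u : A₂ ⟶ A₁` satisfies
`U(u) ∘ n₂ = n₁` (a morphism of `B ↓ U` between them), then `u` is an isomorphism.
(ii) Consequently, a stable factorization `f = U(u_f) ∘ n_f` (with `n_f` a candidate) of
a morphism `f : B ⟶ U(A)` is unique up to a unique isomorphism: given two such
factorizations there is a unique comparison morphism `w` compatible with both, and any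
such comparison morphism is an isomorphism. -/
theorem candidates_unique_and_stable_factorization_unique (U : 𝒜 ⥤ ℬ) :
    (∀ {B : ℬ} {A₁ A₂ : 𝒜} (n₁ : B ⟶ U.obj A₁) (n₂ : B ⟶ U.obj A₂),
        IsCandidate U n₁ → IsCandidate U n₂ →
        ∀ u : A₂ ⟶ A₁, n₂ ≫ U.map u = n₁ → IsIso u) ∧
    (∀ {B : ℬ} {A C₁ C₂ : 𝒜} (f : B ⟶ U.obj A)
        (n₁ : B ⟶ U.obj C₁) (u₁ : C₁ ⟶ A) (n₂ : B ⟶ U.obj C₂) (u₂ : C₂ ⟶ A),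
        IsCandidate U n₁ → IsCandidate U n₂ →
        n₁ ≫ U.map u₁ = f → n₂ ≫ U.map u₂ = f →
        (∃! w : C₁ ⟶ C₂, n₁ ≫ U.map w = n₂ ∧ w ≫ u₂ = u₁) ∧
        (∀ w : C₁ ⟶ C₂, n₁ ≫ U.map w = n₂ ∧ w ≫ u₂ = u₁ → IsIso w)) := by
  have part1 : ∀ {B : ℬ} {A₁ A₂ : 𝒜} (n₁ : B ⟶ U.obj A₁) (n₂ : B ⟶ U.obj A₂),
      IsCandidate U n₁ → IsCandidate U n₂ →
      ∀ u : A₂ ⟶ A₁, n₂ ≫ U.map u = n₁ → IsIso u := by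
    intro B A₁ A₂ n₁ n₂ h₁ h₂ u hu
    obtain ⟨w, ⟨hw1, hw2⟩, _⟩ := h₁ n₂ u (𝟙 A₁) (by simp [hu])
    -- w : A₁ ⟶ A₂, w ≫ u = 𝟙, n₁ ≫ U.map w = n₂
    obtain ⟨w', _, huniq⟩ := h₂ n₂ u u rfl
    have e1 : u ≫ w = 𝟙 A₂ := by
      have h1 : u ≫ w = w' := huniq _ ⟨by rw [Category.assoc, hw1, Category.comp_id],
        by rw [U.map_comp, ← Category.assoc, hu, hw2]⟩
      have h2 : 𝟙 A₂ = w' := huniq _ ⟨by simp, by simp⟩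
      rw [h1, h2]
    exact ⟨w, e1, hw1⟩
  refine ⟨part1, ?_⟩
  intro B A C₁ C₂ f n₁ u₁ n₂ u₂ h₁ h₂ hf₁ hf₂
  obtain ⟨w, ⟨hw1, hw2⟩, huniq⟩ := h₁ n₂ u₂ u₁ (by rw [hf₂, hf₁])
  constructor
  · exact ⟨w, ⟨hw2, hw1⟩, fun y hy => huniq y ⟨hy.2, hy.1⟩⟩
  · intro w' hw'
    exact part1 n₂ n₁ h₂ h₁ w' hw'.1

end Diers
end

section
/- A functor U : 𝒜 ⥤ ℬ is stable if and only if it is a local right adjoint. More precisely: if U is stable, then for each object A of 𝒜 the assignment sending f : B → U(A) to the right part u_f : A_f → A of its stable factorization defines a left adjoint to U/A : 𝒜/A ⥤ ℬ/U(A); conversely, if U is a local right adjoint, then every local unit η^A_f is a candidate, and the factorization f = U(L_A(f)) ∘ η^A_f is a stable factorization of f. -/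
open CategoryTheory CategoryTheory.Limits

universe v u₁ u₂

namespace Diers

variable {𝒜 : Type u₁} {ℬ : Type u₂} [Category.{v} 𝒜] [Category.{v} ℬ]

/-- `U` is *stable* if every morphism `f : B ⟶ U(A)` admits a stable factorization
`f = U(u_f) ∘ n_f` with `n_f` a candidate. -/
def IsStable (U : 𝒜 ⥤ ℬ) : Prop :=
  ∀ {B : ℬ} {A : 𝒜} (f : B ⟶ U.obj A),
    ∃ (Af : 𝒜) (n : B ⟶ U.obj Af) (u : Af ⟶ A), IsCandidate U n ∧ n ≫ U.map u = f

/-- Auxiliary: local units are candidates. -/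
theorem unit_isCandidate (U : 𝒜 ⥤ ℬ) (D : LocalAdjunction U) {B : ℬ} {A : 𝒜}
    (f : B ⟶ U.obj A) : IsCandidate U (D.η f) := by
  intro A₁ A₂ f₁ v u hsq
  have h2 : D.η f ≫ U.map u = D.η f ≫ U.map u := rfl
  set h : B ⟶ U.obj A₂ := D.η f ≫ U.map u with hh
  have h1 : f₁ ≫ U.map v = h := hsq
  set w₁ := D.lift h u (D.η f) h2 with hw₁
  set w₂ := D.lift h v f₁ h1 with hw₂
  have e1 : w₁ ≫ u = D.L h := D.lift_comp h u (D.η f) h2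
  have e2 : D.η h ≫ U.map w₁ = D.η f := D.η_lift h u (D.η f) h2
  have e3 : w₂ ≫ v = D.L h := D.lift_comp h v f₁ h1
  have e4 : D.η h ≫ U.map w₂ = f₁ := D.η_lift h v f₁ h1
  have hf : D.η h ≫ U.map (w₁ ≫ D.L f) = f := by
    rw [U.map_comp, ← Category.assoc, e2, D.fac]
  set s := D.lift f (w₁ ≫ D.L f) (D.η h) hf with hs
  have e5 : s ≫ (w₁ ≫ D.L f) = D.L f := D.lift_comp f (w₁ ≫ D.L f) (D.η h) hf
  have e6 : D.η f ≫ U.map s = D.η h := D.η_lift f (w₁ ≫ D.L f) (D.η h) hf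
  have sw : s ≫ w₁ = 𝟙 _ := by
    have ha : (s ≫ w₁) ≫ D.L f = D.L f := by rw [Category.assoc]; exact e5
    have hb : D.η f ≫ U.map (s ≫ w₁) = D.η f := by
      rw [U.map_comp, ← Category.assoc, e6, e2]
    have hu1 := D.lift_uniq f (D.L f) (D.η f) (D.fac f) (s ≫ w₁) ha hb
    have hu2 := D.lift_uniq f (D.L f) (D.η f) (D.fac f) (𝟙 _) (Category.id_comp _)
      (by simp)
    rw [hu1, hu2]
  refine ⟨s ≫ w₂, ⟨?_, ?_⟩, ?_⟩
  · rw [Category.assoc, e3, ← e1, ← Category.assoc, sw, Category.id_comp]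
  · rw [U.map_comp, ← Category.assoc, e6, e4]
  · rintro w' ⟨hw'1, hw'2⟩
    have huniq : w₁ ≫ w' = w₂ := by
      have ha : (w₁ ≫ w') ≫ v = D.L h := by rw [Category.assoc, hw'1]; exact e1
      have hb : D.η h ≫ U.map (w₁ ≫ w') = f₁ := by
        rw [U.map_comp, ← Category.assoc, e2, hw'2]
      exact D.lift_uniq h v f₁ h1 (w₁ ≫ w') ha hb
    rw [← huniq, ← Category.assoc, sw, Category.id_comp]

/-- **Stable functors and local right adjoints coincide.**
`U : 𝒜 ⥤ ℬ` is stable if and only if it is a local right adjoint (if `U` is stable,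
sending `f : B ⟶ U(A)` to the right part `u_f : A_f ⟶ A` of its stable factorization
provides a left adjoint to `U/A`, i.e. the data of a `LocalAdjunction`); and moreover,
for any local adjunction data for `U`, every local unit `η^A_f` is a candidate, so that
the factorization `f = U(L_A(f)) ∘ η^A_f` is a stable factorization of `f`. -/
theorem isStable_iff_isLocalRightAdjoint (U : 𝒜 ⥤ ℬ) :
    (IsStable U ↔ Nonempty (LocalAdjunction U)) ∧
    (∀ (D : LocalAdjunction U) {B : ℬ} {A : 𝒜} (f : B ⟶ U.obj A),
        IsCandidate U (D.η f)) := by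
  refine ⟨⟨fun hS => ?_, fun ⟨D⟩ {B A} f =>
    ⟨D.vertex f, D.η f, D.L f, unit_isCandidate U D f, D.fac f⟩⟩,
    fun D {B A} f => unit_isCandidate U D f⟩
  have hS' : ∀ (B : ℬ) (A : 𝒜) (f : B ⟶ U.obj A),
      ∃ (Af : 𝒜) (n : B ⟶ U.obj Af) (u : Af ⟶ A),
        IsCandidate U n ∧ n ≫ U.map u = f := fun B A f => hS f
  choose V n u cand fac using hS'
  have hl : ∀ (B : ℬ) (A A' : 𝒜) (f : B ⟶ U.obj A) (u' : A' ⟶ A)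
      (g : B ⟶ U.obj A') (_ : g ≫ U.map u' = f),
      ∃! w : V B A f ⟶ A', w ≫ u' = u B A f ∧ n B A f ≫ U.map w = g := by
    intro B A A' f u' g hg
    exact cand B A f g u' (u B A f) (by rw [hg, fac])
  choose w hw1 hw2 using fun B A A' f u' g hg => (hl B A A' f u' g hg).exists
  exact ⟨{
    vertex := fun {B A} f => V B A f
    L := fun {B A} f => u B A f
    η := fun {B A} f => n B A f
    fac := fun {B A} f => fac B A f
    lift := fun {B A A'} f u' g hg => w B A A' f u' g hg
    lift_comp := fun {B A A'} f u' g hg => hw1 B A A' f u' g hg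
    η_lift := fun {B A A'} f u' g hg => hw2 B A A' f u' g hg
    lift_uniq := fun {B A A'} f u' g hg ww h1 h2 =>
      (hl B A A' f u' g hg).unique ⟨h1, h2⟩
        ⟨hw1 B A A' f u' g hg, hw2 B A A' f u' g hg⟩ }⟩

end Diers
end

section
/- Let 𝒜 be a category. The canonical embedding ι_𝒜 : 𝒜 ↪ Π𝒜 into the free product completion creates connected limits: for every small connected category D and diagram F : D ⥤ 𝒜 admitting a limit in 𝒜, the singleton family ι_𝒜(lim F) is a limit of ι_𝒜 ∘ F in Π𝒜, and a connected cone in 𝒜 whose image under ι_𝒜 is limiting is already limiting. Moreover, Π𝒜 has all small limits if and only if 𝒜 has all small connected limits. -/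
open CategoryTheory CategoryTheory.Limits

universe v u₁ u₂

namespace Diers

/-- An object of the free product completion `Π𝒜` of `𝒜`: a set-indexed family of
objects of `𝒜`. -/
structure FamObj.{w, u} (𝒜 : Type u) : Type (max u (w + 1)) where
  I : Type w
  obj : I → 𝒜

variable {𝒜 : Type u₁} {ℬ : Type u₂} [Category.{v} 𝒜] [Category.{v} ℬ]

/-- A morphism `(Aᵢ)_{i∈I} ⟶ (Bⱼ)_{j∈J}` of the free product completion: a function
`α : J → I` together with a `J`-indexed family of morphisms `A_{α(j)} ⟶ Bⱼ`. -/
structure FamHom (X Y : FamObj.{v} 𝒜) : Type v where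
  idx : Y.I → X.I
  hom : ∀ j : Y.I, X.obj (idx j) ⟶ Y.obj j

theorem FamHom.ext' {X Y : FamObj.{v} 𝒜} {f g : FamHom X Y}
    (h₁ : f.idx = g.idx) (h₂ : HEq f.hom g.hom) : f = g := by
  cases f; cases g; cases h₁; cases h₂; rfl

/-- The free product completion `Π𝒜` of `𝒜`. -/
instance famCategory : Category.{v} (FamObj.{v} 𝒜) where
  Hom := FamHom
  id X := ⟨fun i => i, fun i => 𝟙 (X.obj i)⟩
  comp f g := ⟨fun j => f.idx (g.idx j), fun j => f.hom (g.idx j) ≫ g.hom j⟩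
  id_comp f := FamHom.ext' rfl (heq_of_eq (funext fun j => Category.id_comp (f.hom j)))
  comp_id f := FamHom.ext' rfl (heq_of_eq (funext fun j => Category.comp_id (f.hom j)))
  assoc f g h := FamHom.ext' rfl (heq_of_eq (funext fun j => Category.assoc _ _ _))

/-- The canonical full embedding `ι_𝒜 : 𝒜 ↪ Π𝒜` sending an object to the corresponding
singleton family. -/
def famEmbedding : 𝒜 ⥤ FamObj.{v} 𝒜 where
  obj A := ⟨PUnit.{v + 1}, fun _ => A⟩
  map f := ⟨fun j => j, fun _ => f⟩
  map_id _ := rfl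
  map_comp _ _ := rfl

/-- The free product extension `ΠU : Π𝒜 ⥤ Πℬ` of a functor `U : 𝒜 ⥤ ℬ`, sending
`(Aᵢ)_{i∈I}` to `(U(Aᵢ))_{i∈I}`; it is the unique extension of `ι_ℬ ∘ U` along `ι_𝒜`. -/
def famMap (U : 𝒜 ⥤ ℬ) : FamObj.{v} 𝒜 ⥤ FamObj.{v} ℬ where
  obj X := ⟨X.I, fun i => U.obj (X.obj i)⟩
  map f := ⟨f.idx, fun j => U.map (f.hom j)⟩
  map_id X := FamHom.ext' rfl (heq_of_eq (funext fun j => U.map_id _))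
  map_comp f g := FamHom.ext' rfl (heq_of_eq (funext fun j => U.map_comp _ _))



/-! ### Helper lemmas about morphisms of families -/

theorem FamHom.congr_idx {X Y : FamObj.{v} 𝒜} {f g : X ⟶ Y} (h : f = g) (j : Y.I) :
    f.idx j = g.idx j := by rw [h]

theorem FamHom.congr_hom {X Y : FamObj.{v} 𝒜} {f g : X ⟶ Y} (h : f = g) (j : Y.I) :
    f.hom j = eqToHom (congrArg X.obj (FamHom.congr_idx h j)) ≫ g.hom j := by
  subst h; simp

theorem FamHom.hom_idx_congr {X Y : FamObj.{v} 𝒜} (f : X ⟶ Y) {j j' : Y.I} (h : j = j') :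
    f.hom j = eqToHom (congrArg X.obj (congrArg f.idx h)) ≫ f.hom j' ≫
      eqToHom (congrArg Y.obj h.symm) := by
  subst h; simp

theorem FamHom.ext2 {X Y : FamObj.{v} 𝒜} {f g : X ⟶ Y} (h : ∀ j, f.idx j = g.idx j)
    (h2 : ∀ j, f.hom j = eqToHom (congrArg X.obj (h j)) ≫ g.hom j) : f = g := by
  have hi : f.idx = g.idx := funext h
  obtain ⟨fi, fh⟩ := f; obtain ⟨gi, gh⟩ := g
  dsimp at hi; subst hi
  refine FamHom.ext' rfl (heq_of_eq (funext fun j => ?_))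
  simpa using h2 j

@[simp] theorem fam_comp_idx {X Y Z : FamObj.{v} 𝒜} (f : X ⟶ Y) (g : Y ⟶ Z) (j : Z.I) :
    (f ≫ g).idx j = f.idx (g.idx j) := rfl

@[simp] theorem fam_comp_hom {X Y Z : FamObj.{v} 𝒜} (f : X ⟶ Y) (g : Y ⟶ Z) (j : Z.I) :
    (f ≫ g).hom j = f.hom (g.idx j) ≫ g.hom j := rfl

@[simp] theorem fam_id_idx {X : FamObj.{v} 𝒜} (j : X.I) : (𝟙 X : X ⟶ X).idx j = j := rfl

@[simp] theorem fam_id_hom {X : FamObj.{v} 𝒜} (j : X.I) :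
    (𝟙 X : X ⟶ X).hom j = 𝟙 (X.obj j) := rfl

@[simp] theorem famEmbedding_map_idx {A B : 𝒜} (f : A ⟶ B) (j : PUnit.{v+1}) :
    ((famEmbedding : 𝒜 ⥤ FamObj.{v} 𝒜).map f).idx j = j := rfl

@[simp] theorem famEmbedding_map_hom {A B : 𝒜} (f : A ⟶ B) (j : PUnit.{v+1}) :
    ((famEmbedding : 𝒜 ⥤ FamObj.{v} 𝒜).map f).hom j = f := rfl

section Connected

variable {D : Type v} [SmallCategory D] [IsConnected D] {F : D ⥤ 𝒜}

/-- In a cone over `ι ∘ F` with `D` connected, the index picked out by each leg is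
independent of the object of `D`. -/
theorem cone_idx_const (s : Cone (F ⋙ (famEmbedding : 𝒜 ⥤ FamObj.{v} 𝒜))) (d d' : D) :
    (s.π.app d).idx PUnit.unit = (s.π.app d').idx PUnit.unit := by
  refine constant_of_preserves_morphisms (α := s.pt.I)
    (fun d => (s.π.app d).idx PUnit.unit) ?_ d d'
  intro d₁ d₂ u
  have h := FamHom.congr_idx (s.w u).symm PUnit.unit
  exact h.symm

/-- The underlying cone in `𝒜` of a cone over `ι ∘ F`. -/
noncomputable def coneDown (s : Cone (F ⋙ (famEmbedding : 𝒜 ⥤ FamObj.{v} 𝒜))) : Cone F where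
  pt := s.pt.obj ((s.π.app (Classical.arbitrary D)).idx PUnit.unit)
  π :=
    { app := fun d =>
        eqToHom (congrArg s.pt.obj (cone_idx_const s (Classical.arbitrary D) d)) ≫
          (s.π.app d).hom PUnit.unit
      naturality := fun d d' u => by
        have h := FamHom.congr_hom (s.w u).symm PUnit.unit
        change _ = _ ≫ (s.π.app d).hom PUnit.unit ≫ F.map u at h
        simp only [Functor.const_obj_obj, Functor.const_obj_map, Category.id_comp,
          Category.assoc]
        rw [h]
        erw [eqToHom_trans_assoc, Category.assoc]
        rfl }

/-- The comparison morphism from a cone over `ι ∘ F` down to the image of the limit. -/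
noncomputable def liftUp {c : Cone F} (hc : IsLimit c)
    (s : Cone (F ⋙ (famEmbedding : 𝒜 ⥤ FamObj.{v} 𝒜))) :
    s.pt ⟶ ((famEmbedding : 𝒜 ⥤ FamObj.{v} 𝒜).mapCone c).pt where
  idx _ := (s.π.app (Classical.arbitrary D)).idx PUnit.unit
  hom _ := hc.lift (coneDown s)

noncomputable def famEmbedding_mapsLimit {c : Cone F} (hc : IsLimit c) :
    IsLimit ((famEmbedding : 𝒜 ⥤ FamObj.{v} 𝒜).mapCone c) := by
  refine ⟨fun s => liftUp hc s, ?_, ?_⟩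
  · intro s d
    refine FamHom.ext2 (fun j => cone_idx_const s (Classical.arbitrary D) d) (fun j => ?_)
    have h := hc.fac (coneDown s) d
    simp only [fam_comp_hom, famEmbedding_map_idx, famEmbedding_map_hom, Functor.mapCone_pt,
      Functor.mapCone_π_app, liftUp]
    erw [h]
    rfl
  · intro s m hm
    have hidx : ∀ j : PUnit.{v+1},
        m.idx j = (s.π.app (Classical.arbitrary D)).idx PUnit.unit := fun j =>
      FamHom.congr_idx (hm (Classical.arbitrary D)) PUnit.unit
    refine FamHom.ext2 hidx (fun j => ?_)
    have key : eqToHom (congrArg s.pt.obj (hidx PUnit.unit).symm) ≫ m.hom PUnit.unit =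
        hc.lift (coneDown s) := by
      refine hc.uniq (coneDown s) _ (fun d => ?_)
      have h := FamHom.congr_hom (hm d) PUnit.unit
      simp only [fam_comp_hom, famEmbedding_map_idx, famEmbedding_map_hom, Functor.mapCone_pt,
        Functor.mapCone_π_app] at h
      simp only [coneDown, Category.assoc]
      change m.hom PUnit.unit ≫ c.π.app d = _ at h
      erw [Category.assoc, h, eqToHom_trans_assoc]
    have : m.hom j = eqToHom (congrArg s.pt.obj (hidx j)) ≫
        (eqToHom (congrArg s.pt.obj (hidx PUnit.unit).symm) ≫ m.hom PUnit.unit) := by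
      cases j; simp [eqToHom_trans_assoc]
    rw [this, key]
    rfl

noncomputable def famEmbedding_reflectsLimit {c : Cone F}
    (hc : IsLimit ((famEmbedding : 𝒜 ⥤ FamObj.{v} 𝒜).mapCone c)) : IsLimit c := by
  refine ⟨fun s => (hc.lift ((famEmbedding : 𝒜 ⥤ FamObj.{v} 𝒜).mapCone s)).hom PUnit.unit,
      ?_, ?_⟩
  · intro s d
    have h := FamHom.congr_hom (hc.fac ((famEmbedding : 𝒜 ⥤ FamObj.{v} 𝒜).mapCone s) d)
      PUnit.unit
    exact h.trans (Category.id_comp _)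
  · intro s m hm
    have key : (famEmbedding : 𝒜 ⥤ FamObj.{v} 𝒜).map m =
        hc.lift ((famEmbedding : 𝒜 ⥤ FamObj.{v} 𝒜).mapCone s) :=
      hc.uniq ((famEmbedding : 𝒜 ⥤ FamObj.{v} 𝒜).mapCone s)
        ((famEmbedding : 𝒜 ⥤ FamObj.{v} 𝒜).map m)
        (fun d => by
          simp only [Functor.mapCone_pt, Functor.mapCone_π_app, ← Functor.map_comp]
          rw [hm d])
    have h := FamHom.congr_hom key PUnit.unit
    exact h.trans (Category.id_comp _)

/-- The constant-index morphism from the apex of a connected cone in `Π𝒜` down to the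
singleton family on its distinguished component. -/
noncomputable def coneDownComparison (s : Cone (F ⋙ (famEmbedding : 𝒜 ⥤ FamObj.{v} 𝒜))) :
    s.pt ⟶ (famEmbedding : 𝒜 ⥤ FamObj.{v} 𝒜).obj (coneDown s).pt where
  idx _ := (s.π.app (Classical.arbitrary D)).idx PUnit.unit
  hom _ := 𝟙 _

theorem coneDownComparison_w (s : Cone (F ⋙ (famEmbedding : 𝒜 ⥤ FamObj.{v} 𝒜))) (d : D) :
    coneDownComparison s ≫ ((famEmbedding : 𝒜 ⥤ FamObj.{v} 𝒜).mapCone (coneDown s)).π.app d =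
      s.π.app d := by
  refine FamHom.ext2 (fun j => cone_idx_const s (Classical.arbitrary D) d) (fun j => ?_)
  cases j
  exact Category.id_comp _

/-- If a connected limit of `ι ∘ F` exists in `Π𝒜`, then the singleton-family cone on the
underlying cone is also a limit. -/
noncomputable def coneDownMapConeIsLimit {t : Cone (F ⋙ (famEmbedding : 𝒜 ⥤ FamObj.{v} 𝒜))}
    (ht : IsLimit t) : IsLimit ((famEmbedding : 𝒜 ⥤ FamObj.{v} 𝒜).mapCone (coneDown t)) := by
  have he : ∀ d, coneDownComparison t ≫
      ((famEmbedding : 𝒜 ⥤ FamObj.{v} 𝒜).mapCone (coneDown t)).π.app d =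
      t.π.app d := coneDownComparison_w t
  set u := ht.lift ((famEmbedding : 𝒜 ⥤ FamObj.{v} 𝒜).mapCone (coneDown t)) with hu_def
  have hu : ∀ d, u ≫ t.π.app d =
      ((famEmbedding : 𝒜 ⥤ FamObj.{v} 𝒜).mapCone (coneDown t)).π.app d :=
    ht.fac ((famEmbedding : 𝒜 ⥤ FamObj.{v} 𝒜).mapCone (coneDown t))
  have heu : coneDownComparison t ≫ u = 𝟙 t.pt := ht.hom_ext (fun d => by
    rw [Category.assoc, hu d, he d, Category.id_comp])
  have hu0 : u.hom ((t.π.app (Classical.arbitrary D)).idx PUnit.unit) =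
      eqToHom (congrArg t.pt.obj
        (FamHom.congr_idx heu ((t.π.app (Classical.arbitrary D)).idx PUnit.unit))) := by
    have h1 := FamHom.congr_hom heu ((t.π.app (Classical.arbitrary D)).idx PUnit.unit)
    exact (Category.id_comp _).symm.trans (h1.trans (Category.comp_id _))
  have hue : u ≫ coneDownComparison t = 𝟙 _ := by
    refine FamHom.ext2 (fun j => rfl) (fun j => ?_)
    cases j
    show u.hom ((t.π.app (Classical.arbitrary D)).idx PUnit.unit) ≫ 𝟙 _ = eqToHom _ ≫ 𝟙 _
    rw [hu0]
    rfl
  refine ⟨fun s => ht.lift s ≫ coneDownComparison t, fun s d => ?_, fun s m hm => ?_⟩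
  · rw [Category.assoc, he d, ht.fac]
  · show m = ht.lift s ≫ coneDownComparison t
    have hmu : m ≫ u = ht.lift s := ht.uniq s (m ≫ u) (fun d => by
      rw [Category.assoc, hu d, hm d])
    rw [← hmu, Category.assoc, hue, Category.comp_id]

end Connected

section AllLimits

variable {D : Type v} [SmallCategory D] (G : D ⥤ FamObj.{v} 𝒜)

/-- The category of elements of the index-set diagram of `G`. -/
structure Elt : Type v where
  fst : D
  snd : (G.obj fst).I

instance : SmallCategory (Elt G) where
  Hom e e' := { u : e.1 ⟶ e'.1 // (G.map u).idx e'.2 = e.2 }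
  id e := ⟨𝟙 e.1, by simpa using FamHom.congr_idx (G.map_id e.1) e.2⟩
  comp {e e' e''} f g := ⟨f.1 ≫ g.1, by
    have h := FamHom.congr_idx (G.map_comp f.1 g.1) e''.2
    simp only [fam_comp_idx] at h
    rw [h, g.2, f.2]⟩
  id_comp f := Subtype.ext (Category.id_comp _)
  comp_id f := Subtype.ext (Category.comp_id _)
  assoc f g h := Subtype.ext (Category.assoc _ _ _)

/-- A generating morphism in the element category. -/
def eltHom {d d' : D} (u : d ⟶ d') (j : (G.obj d').I) :
    (⟨d, (G.map u).idx j⟩ : Elt G) ⟶ (⟨d', j⟩ : Elt G) := ⟨u, rfl⟩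

/-- The canonical diagram on the category of elements. -/
def eltDiagram : Elt G ⥤ 𝒜 where
  obj e := (G.obj e.1).obj e.2
  map {e e'} f := eqToHom (congrArg (G.obj e.1).obj f.2.symm) ≫ (G.map f.1).hom e'.2
  map_id e := by
    change eqToHom _ ≫ (G.map (𝟙 e.1)).hom e.2 = 𝟙 ((G.obj e.1).obj e.2)
    have h := FamHom.congr_hom (G.map_id e.1) e.2
    simp only [fam_id_hom] at h
    rw [h]
    simp
  map_comp {e e' e''} f g := by
    change eqToHom _ ≫ (G.map (f.1 ≫ g.1)).hom e''.2 =
      (eqToHom _ ≫ (G.map f.1).hom e'.2) ≫ eqToHom _ ≫ (G.map g.1).hom e''.2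
    have h := FamHom.congr_hom (G.map_comp f.1 g.1) e''.2
    simp only [fam_comp_hom] at h
    rw [h, FamHom.hom_idx_congr (G.map f.1) g.2]
    simp [eqToHom_trans_assoc]

variable (hyp : ∀ (D' : Type v) [SmallCategory D'] [IsConnected D'], HasLimitsOfShape D' 𝒜)

/-- The limit family is indexed by the connected components of the element category, with
the component-wise limits as objects. -/
noncomputable def Lobj (x : ConnectedComponents (Elt G)) : 𝒜 :=
  haveI := hyp (ConnectedComponents.Component x)
  limit (ConnectedComponents.ι x ⋙ eltDiagram G)

/-- The projection out of a component-wise limit. -/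
noncomputable def Lpi (x : ConnectedComponents (Elt G)) (e : Elt G)
    (he : Quotient.mk'' e = x) : Lobj G hyp x ⟶ (G.obj e.1).obj e.2 :=
  haveI := hyp (ConnectedComponents.Component x)
  limit.π (ConnectedComponents.ι x ⋙ eltDiagram G) ⟨e, he⟩

theorem Lpi_eqToHom {x y : ConnectedComponents (Elt G)} (h : x = y) (e : Elt G)
    (he : Quotient.mk'' e = x) :
    eqToHom (congrArg (Lobj G hyp) h) ≫ Lpi G hyp y e (he.trans h) = Lpi G hyp x e he := by
  subst h; simp

theorem Lpi_w {x : ConnectedComponents (Elt G)} {e e' : Elt G} (he : Quotient.mk'' e = x)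
    (he' : Quotient.mk'' e' = x) (f : e ⟶ e') :
    Lpi G hyp x e he ≫ (eltDiagram G).map f = Lpi G hyp x e' he' := by
  haveI := hyp (ConnectedComponents.Component x)
  exact limit.w (ConnectedComponents.ι x ⋙ eltDiagram G)
    (ObjectProperty.homMk (P := ConnectedComponents.objectProperty x) (X := ⟨e, he⟩) (Y := ⟨e', he'⟩) f)

/-- The limit cone over an arbitrary small diagram in `Π𝒜`. -/
noncomputable def famLimitCone : Cone G where
  pt := ⟨ConnectedComponents (Elt G), Lobj G hyp⟩
  π :=
    { app := fun d =>
        ⟨fun j => Quotient.mk'' (⟨d, j⟩ : Elt G), fun j => Lpi G hyp _ ⟨d, j⟩ rfl⟩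
      naturality := fun d d' u => by
        simp only [Functor.const_obj_obj, Functor.const_obj_map, Category.id_comp]
        have hcon : ∀ j : (G.obj d').I,
            (Quotient.mk'' (⟨d', j⟩ : Elt G) : ConnectedComponents (Elt G)) =
              Quotient.mk'' (⟨d, (G.map u).idx j⟩ : Elt G) := fun j =>
          (Quotient.sound (Zigzag.of_hom (eltHom G u j))).symm
        refine FamHom.ext2 (fun j => hcon j) (fun j => ?_)
        have h1 := Lpi_eqToHom G hyp (hcon j) (⟨d, (G.map u).idx j⟩ : Elt G) (hcon j).symm
        have h2 := Lpi_w G hyp (x := Quotient.mk'' (⟨d', j⟩ : Elt G))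
          ((hcon j).symm) rfl (eltHom G u j)
        simp only [fam_comp_hom]
        rw [← Category.assoc, h1, ← h2]
        simp [eltDiagram, eltHom] }

/-- The index function of the comparison morphism from a cone to the limit family. -/
noncomputable def coneIdxFun (s : Cone G) : ConnectedComponents (Elt G) → s.pt.I :=
  ConnectedComponents.liftFunctor (Elt G)
    { obj := fun e => Discrete.mk ((s.π.app e.1).idx e.2)
      map := fun {e e'} f => Discrete.eqToHom (by
        have h := FamHom.congr_idx (s.w f.1) e'.2
        simp only [fam_comp_idx] at h
        rw [f.2] at h
        exact h)
      map_id := fun e => Subsingleton.elim _ _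
      map_comp := fun f g => Subsingleton.elim _ _ }

theorem coneIdxFun_mk (s : Cone G) (e : Elt G) :
    coneIdxFun G s (Quotient.mk'' e) = (s.π.app e.1).idx e.2 := rfl

/-- The cone over the component diagram induced by a cone over `G`. -/
noncomputable def coneAt (s : Cone G) (x : ConnectedComponents (Elt G)) :
    Cone (ConnectedComponents.ι x ⋙ eltDiagram G) where
  pt := s.pt.obj (coneIdxFun G s x)
  π :=
    { app := fun e =>
        eqToHom (congrArg s.pt.obj (congrArg (coneIdxFun G s) e.property).symm) ≫
          (s.π.app e.obj.1).hom e.obj.2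
      naturality := fun e e' f => by
        simp only [Functor.comp_obj, Functor.comp_map, Functor.const_obj_obj,
          Functor.const_obj_map, Category.id_comp, Category.assoc]
        have h := FamHom.congr_hom (s.w f.hom.1) e'.obj.2
        simp only [fam_comp_hom] at h
        rw [FamHom.hom_idx_congr (s.π.app e.obj.1) f.hom.2] at h
        have h' := (eqToHom_comp_iff (congrArg s.pt.obj
          (FamHom.congr_idx (s.w f.hom.1) e'.obj.2)) _ _).mp h.symm
        rw [show (eltDiagram G).map ((ConnectedComponents.ι x).map f) =
          eqToHom (congrArg (G.obj e.obj.1).obj f.hom.2.symm) ≫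
            (G.map f.hom.1).hom e'.obj.2 from rfl]
        rw [h']
        erw [eqToHom_trans_assoc, Category.assoc, Category.assoc, Category.assoc, eqToHom_trans_assoc]
        rfl }

/-- The components of the comparison morphism. -/
noncomputable def homLift (s : Cone G) (x : ConnectedComponents (Elt G)) :
    s.pt.obj (coneIdxFun G s x) ⟶ Lobj G hyp x :=
  haveI := hyp (ConnectedComponents.Component x)
  limit.lift (ConnectedComponents.ι x ⋙ eltDiagram G) (coneAt G s x)

theorem homLift_Lpi (s : Cone G) (x : ConnectedComponents (Elt G)) (e : Elt G)
    (he : Quotient.mk'' e = x) :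
    homLift G hyp s x ≫ Lpi G hyp x e he =
      eqToHom (congrArg s.pt.obj (congrArg (coneIdxFun G s) he).symm) ≫
        (s.π.app e.1).hom e.2 := by
  haveI := hyp (ConnectedComponents.Component x)
  exact limit.lift_π (coneAt G s x) (⟨e, he⟩ : ConnectedComponents.Component x)

/-- The comparison morphism from a cone to the limit cone. -/
noncomputable def famLimitLift (s : Cone G) : s.pt ⟶ (famLimitCone G hyp).pt :=
  ⟨coneIdxFun G s, homLift G hyp s⟩

/-- The limit cone is limiting. -/
noncomputable def famLimitIsLimit : IsLimit (famLimitCone G hyp) := by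
  refine ⟨famLimitLift G hyp, fun s d => ?_, fun s m hm => ?_⟩
  · refine FamHom.ext2 (fun j => rfl) (fun j => ?_)
    simp only [fam_comp_hom, famLimitLift]
    have h := homLift_Lpi G hyp s (Quotient.mk'' (⟨d, j⟩ : Elt G)) ⟨d, j⟩ rfl
    exact h
  · have hidx : ∀ x, m.idx x = coneIdxFun G s x := by
      intro x
      induction x using Quotient.ind with
      | _ e =>
        obtain ⟨d, j⟩ := e
        exact FamHom.congr_idx (hm d) j
    refine FamHom.ext2 (fun x => (hidx x).trans rfl) (fun x => ?_)
    change ConnectedComponents (Elt G) at x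
    haveI := hyp (ConnectedComponents.Component x)
    apply limit.hom_ext
    rintro ⟨⟨a, i⟩, hx⟩
    subst hx
    rw [show (limit.π (ConnectedComponents.ι (Quotient.mk'' (⟨a, i⟩ : Elt G)) ⋙ eltDiagram G)
      ⟨⟨a, i⟩, rfl⟩) = Lpi G hyp _ (⟨a, i⟩ : Elt G) rfl from rfl]
    have key : m.hom (Quotient.mk'' (⟨a, i⟩ : Elt G)) ≫
        Lpi G hyp (Quotient.mk'' (⟨a, i⟩ : Elt G)) ⟨a, i⟩ rfl =
        eqToHom (congrArg s.pt.obj (FamHom.congr_idx (hm a) i)) ≫ (s.π.app a).hom i :=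
      FamHom.congr_hom (hm a) i
    erw [key, Category.assoc]
    simp only [famLimitLift]
    erw [homLift_Lpi G hyp s (Quotient.mk'' (⟨a, i⟩ : Elt G)) ⟨a, i⟩ rfl]
    erw [Category.id_comp]
    rfl

end AllLimits

/-- **The embedding into the free product completion creates connected limits.**
For every small connected category `D` and diagram `F : D ⥤ 𝒜`:
* if `c` is a limit cone of `F` in `𝒜` then the singleton family `ι_𝒜(lim F)` is a
  limit of `ι_𝒜 ∘ F` in `Π𝒜` (i.e. `ι_𝒜` maps limit cones to limit cones), and
* a connected cone in `𝒜` whose image under `ι_𝒜` is limiting is already limiting.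
Moreover `Π𝒜` has all small limits if and only if `𝒜` has all small connected
limits. -/
theorem famEmbedding_creates_connected_limits :
    (∀ (D : Type v) [SmallCategory D] [CategoryTheory.IsConnected D]
        (F : D ⥤ 𝒜) (c : Cone F), Nonempty (IsLimit c) →
        Nonempty (IsLimit ((famEmbedding : 𝒜 ⥤ FamObj.{v} 𝒜).mapCone c))) ∧
    (∀ (D : Type v) [SmallCategory D] [CategoryTheory.IsConnected D]
        (F : D ⥤ 𝒜) (c : Cone F),
        Nonempty (IsLimit ((famEmbedding : 𝒜 ⥤ FamObj.{v} 𝒜).mapCone c)) →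
        Nonempty (IsLimit c)) ∧
    (HasLimitsOfSize.{v, v} (FamObj.{v} 𝒜) ↔
        ∀ (D : Type v) [SmallCategory D] [CategoryTheory.IsConnected D],
          HasLimitsOfShape D 𝒜) := by
  refine ⟨fun D _ _ F c hc => ⟨famEmbedding_mapsLimit hc.some⟩,
    fun D _ _ F c hc => ⟨famEmbedding_reflectsLimit hc.some⟩, ?_, ?_⟩
  · intro h D _ _
    haveI := h
    constructor
    intro F
    exact HasLimit.mk ⟨coneDown (limit.cone (F ⋙ famEmbedding)),
      famEmbedding_reflectsLimit (coneDownMapConeIsLimit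
        (limit.isLimit (F ⋙ famEmbedding)))⟩
  · intro hyp
    constructor
    intro D _
    constructor
    intro G
    exact HasLimit.mk ⟨famLimitCone G hyp, famLimitIsLimit G hyp⟩

end Diers
end

section
/- Let (ℒ, ℛ) be an orthogonality structure on a category 𝒞 with coequalizers. If a parallel pair a, a' : C ⇉ D in 𝒞 is equalized by a morphism l : B → C belonging to ℒ (i.e. a ∘ l = a' ∘ l), then the coequalizer q : D → coeq(a,a') belongs to ℒ. -/
open CategoryTheory CategoryTheory.Limits

universe v u₁

namespace Diers

variable {𝒞 : Type u₁} [Category.{v} 𝒞]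

/-- `l` is *orthogonal* to `r` (`l ⊥ r`) if every commutative square `u ≫ r = l ≫ v`
admits a unique diagonal filler `d` with `l ≫ d = u` and `d ≫ r = v`. -/
def Orthogonal {A B X Y : 𝒞} (l : A ⟶ B) (r : X ⟶ Y) : Prop :=
  ∀ (u : A ⟶ X) (v : B ⟶ Y), u ≫ r = l ≫ v → ∃! d : B ⟶ X, l ≫ d = u ∧ d ≫ r = v

/-- An *orthogonality structure* `(ℒ, ℛ)` on `𝒞`: two classes of morphisms with
`ℒ = ^⊥ℛ` (the morphisms left orthogonal to every member of `ℛ`) and `ℛ = ℒ^⊥`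
(the morphisms right orthogonal to every member of `ℒ`). -/
structure OrthStructure (𝒞 : Type u₁) [Category.{v} 𝒞] where
  IsL : MorphismProperty 𝒞
  IsR : MorphismProperty 𝒞
  isL_iff : ∀ {A B : 𝒞} (l : A ⟶ B),
      IsL l ↔ ∀ {X Y : 𝒞} (r : X ⟶ Y), IsR r → Orthogonal l r
  isR_iff : ∀ {X Y : 𝒞} (r : X ⟶ Y),
      IsR r ↔ ∀ {A B : 𝒞} (l : A ⟶ B), IsL l → Orthogonal l r

/-- **Coequalizers of pairs equalized by a left map are left maps.**
Let `(ℒ, ℛ)` be an orthogonality structure on a category `𝒞` with coequalizers. If the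
parallel pair `a, a' : C ⇉ D` is equalized by a morphism `l : B ⟶ C` of `ℒ`
(`a ∘ l = a' ∘ l`), then the coequalizer `q : D ⟶ coeq(a, a')` belongs to `ℒ`. -/
theorem coequalizer_mem_left_class [HasCoequalizers 𝒞] (S : OrthStructure 𝒞)
    {B C D : 𝒞} (a a' : C ⟶ D) (l : B ⟶ C)
    (hl : S.IsL l) (h : l ≫ a = l ≫ a') :
    S.IsL (coequalizer.π a a') := by
  rw [S.isL_iff]
  intro X Y r hr u v hsq
  have horth : Orthogonal l r := (S.isL_iff l).mp hl r hr
  -- show a ≫ u = a' ≫ u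
  have key : a ≫ u = a' ≫ u := by
    have hc : (l ≫ a ≫ u) ≫ r = l ≫ (a ≫ coequalizer.π a a' ≫ v) := by
      simp only [Category.assoc, hsq]
    obtain ⟨d, _, hd⟩ := horth (l ≫ a ≫ u) (a ≫ coequalizer.π a a' ≫ v) hc
    have h1 : a ≫ u = d := hd (a ≫ u) ⟨by simp, by simp [Category.assoc, hsq]⟩
    have h2 : a' ≫ u = d := hd (a' ≫ u)
      ⟨by rw [← Category.assoc, ← h, Category.assoc],
       by rw [Category.assoc, hsq, ← Category.assoc, ← coequalizer.condition, Category.assoc]⟩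
    rw [h1, h2]
  refine ⟨coequalizer.desc u key, ⟨coequalizer.π_desc _ _, ?_⟩, ?_⟩
  · apply coequalizer.hom_ext
    rw [← Category.assoc, coequalizer.π_desc, hsq]
  · rintro d ⟨hd1, hd2⟩
    apply coequalizer.hom_ext
    rw [hd1, coequalizer.π_desc]

end Diers
end
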